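/- Let b = (b_1,…,b_n) ∈ 𝓑'. Then the quotient ring R_b = R/I_b has ℂ-dimension b_1 b_2 ⋯ b_n, and the classes of the monomials x_1^{j_1} x_2^{j_2} ⋯ x_n^{j_n} with 0 ≤ j_i < b_i for all i form a ℂ-basis of R_b. -/

import Mathlib

open MvPolynomial

set_option maxHeartbeats 1000000

/-- The complete homogeneous symmetric polynomial of degree `j` in the variables indexed
by the finite set `S`. -/
noncomputable def hset (n : ℕ) (S : Finset (Fin n)) (j : ℕ) : MvPolynomial (Fin n) ℂ :=
  ∑ μ ∈ Finset.univ.filter (fun μ : Sym (Fin n) j => ∀ i ∈ μ, i ∈ S),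
    (μ.val.map MvPolynomial.X).prod

/-- The complete homogeneous symmetric polynomial `h_j(x_1, …, x_k)` of degree `j` in the
first `k` variables (these are the 0-based indices `0, …, k-1`). -/
noncomputable def hfirst (n k j : ℕ) : MvPolynomial (Fin n) ℂ :=
  hset n (Finset.univ.filter (fun i : Fin n => (i : ℕ) < k)) j

/-- The ideal `I_b` generated by `h_{b_1}(x_1), h_{b_2}(x_1,x_2), …, h_{b_n}(x_1,…,x_n)`. -/
noncomputable def Ib {n : ℕ} (b : Fin n → ℕ) : Ideal (MvPolynomial (Fin n) ℂ) :=
  Ideal.span (Set.range fun i : Fin n => hfirst n ((i : ℕ) + 1) (b i))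

/-- `b ∈ 𝓑'`: a sequence of positive integers with `b i ≥ b (i+1) ≥ b i - 1` for all `i`. -/
def Bprime {n : ℕ} (b : Fin n → ℕ) : Prop :=
  (∀ i, 0 < b i) ∧ ∀ (i : ℕ) (h : i + 1 < n),
    b ⟨i + 1, h⟩ ≤ b ⟨i, Nat.lt_of_succ_lt h⟩ ∧
      b ⟨i, Nat.lt_of_succ_lt h⟩ ≤ b ⟨i + 1, h⟩ + 1

section Aux

variable {n m : ℕ}

lemma prodX (μ : Multiset (Fin n)) :
    (μ.map (MvPolynomial.X (R := ℂ))).prod = MvPolynomial.monomial (Multiset.toFinsupp μ) 1 := by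
  induction μ using Multiset.induction with
  | empty => simp
  | cons a s ih =>
      have h : a ::ₘ s = {a} + s := by simp [Multiset.singleton_add]
      rw [h, Multiset.toFinsupp_add, Multiset.toFinsupp_singleton, Multiset.map_add,
        Multiset.prod_add, Multiset.map_singleton, Multiset.prod_singleton, ih,
        X, monomial_mul, one_mul]

lemma hset_eq (S : Finset (Fin n)) (j : ℕ) :
    hset n S j = ∑ d ∈ S.finsuppAntidiag j, MvPolynomial.monomial d 1 := by
  unfold hset
  refine Finset.sum_bij (fun μ _ => Multiset.toFinsupp μ.val) ?_ ?_ ?_ ?_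
  · intro μ hμ
    rw [Finset.mem_filter] at hμ
    rw [Finset.mem_finsuppAntidiag']
    constructor
    · have h2 := Finsupp.card_toMultiset (Multiset.toFinsupp μ.val)
      rw [Multiset.toFinsupp_toMultiset] at h2
      show (Multiset.toFinsupp μ.val).sum (fun _ x => x) = j
      rw [show ((Multiset.toFinsupp μ.val).sum fun _ x => x)
          = ((Multiset.toFinsupp μ.val).sum fun _ => id) from rfl, ← h2, μ.2]
    · intro i hi
      rw [Multiset.toFinsupp_support, Multiset.mem_toFinset] at hi
      exact hμ.2 i hi
  · intro μ _ ν _ h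
    exact Sym.ext (Multiset.toFinsupp.injective h)
  · intro d hd
    rw [Finset.mem_finsuppAntidiag'] at hd
    have hc : (Finsupp.toMultiset d).card = j := by
      rw [Finsupp.card_toMultiset, ← hd.1]; rfl
    refine ⟨⟨Finsupp.toMultiset d, hc⟩, ?_, by simp [Finsupp.toMultiset_toFinsupp]⟩
    refine Finset.mem_filter.mpr ?_
    refine ⟨Finset.mem_univ _, fun i hi => ?_⟩
    have h3 : i ∈ Finsupp.toMultiset d := hi
    rw [Finsupp.mem_toMultiset] at h3
    exact hd.2 h3
  · intro μ hμ
    exact prodX μ.val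

lemma hset_zero (S : Finset (Fin n)) : hset n S 0 = 1 := by
  rw [hset_eq]
  have h : S.finsuppAntidiag (0:ℕ) = ({0} : Finset (Fin n →₀ ℕ)) := by
    ext f
    rw [Finset.mem_finsuppAntidiag, Finset.mem_singleton]
    constructor
    · rintro ⟨h1, h2⟩
      ext i
      by_cases hi : i ∈ S
      · exact (Finset.sum_eq_zero_iff.mp h1) i hi
      · exact Finsupp.notMem_support_iff.mp (fun hm => hi (h2 hm))
    · rintro rfl
      simp
  rw [h, Finset.sum_singleton, monomial_zero', C_1]

lemma rename_hset (f : Fin n → Fin m) (hf : Function.Injective f) (S : Finset (Fin n)) (j : ℕ) :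
    MvPolynomial.rename f (hset n S j) = hset m (S.image f) j := by
  rw [hset_eq, hset_eq, map_sum]
  simp_rw [rename_monomial]
  refine Finset.sum_bij (fun d _ => d.mapDomain f) ?_ ?_ ?_ ?_
  · intro d hd
    rw [Finset.mem_finsuppAntidiag'] at hd ⊢
    constructor
    · rw [Finsupp.sum_mapDomain_index (fun _ => rfl) (fun _ _ _ => rfl)]
      exact hd.1
    · refine (Finsupp.mapDomain_support).trans ?_
      exact Finset.image_subset_image hd.2
  · intro d _ e _ h
    exact Finsupp.mapDomain_injective hf h
  · intro d' hd'
    rw [Finset.mem_finsuppAntidiag'] at hd'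
    have hsub : ↑d'.support ⊆ Set.range f := by
      intro i hi
      obtain ⟨s, _, rfl⟩ := Finset.mem_image.mp (hd'.2 hi)
      exact ⟨s, rfl⟩
    have hmap : Finsupp.mapDomain f (Finsupp.comapDomain f d' hf.injOn) = d' :=
      Finsupp.mapDomain_comapDomain f hf d' hsub
    refine ⟨Finsupp.comapDomain f d' hf.injOn, ?_, hmap⟩
    rw [Finset.mem_finsuppAntidiag']
    constructor
    · have := hd'.1
      rw [← hmap, Finsupp.sum_mapDomain_index (fun _ => rfl) (fun _ _ _ => rfl)] at this
      exact this
    · intro i hi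
      have hci : d' (f i) ≠ 0 := by
        simpa [Finsupp.comapDomain_apply] using Finsupp.mem_support_iff.mp hi
      have : f i ∈ S.image f := hd'.2 (Finsupp.mem_support_iff.mpr hci)
      obtain ⟨s, hs, hsf⟩ := Finset.mem_image.mp this
      rwa [← hf hsf]
  · intro d _
    rfl

lemma hset_insert (a : Fin n) (S : Finset (Fin n)) (ha : a ∉ S) (j : ℕ) :
    hset n (insert a S) (j+1) = hset n S (j+1) + MvPolynomial.X a * hset n (insert a S) j := by
  rw [hset_eq, hset_eq, hset_eq, Finset.mul_sum]
  rw [← Finset.sum_filter_add_sum_filter_not (((insert a S).finsuppAntidiag (j+1))) (fun d => d a = 0)]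
  congr 1
  · apply Finset.sum_congr _ (fun _ _ => rfl)
    ext d
    rw [Finset.mem_filter, Finset.mem_finsuppAntidiag', Finset.mem_finsuppAntidiag']
    constructor
    · rintro ⟨⟨h1, h2⟩, h3⟩
      refine ⟨h1, fun i hi => ?_⟩
      rcases Finset.mem_insert.mp (h2 hi) with rfl | h
      · exact absurd h3 (Finsupp.mem_support_iff.mp hi)
      · exact h
    · rintro ⟨h1, h2⟩
      have hna : d a = 0 := Finsupp.notMem_support_iff.mp (fun hm => ha (h2 hm))
      exact ⟨⟨h1, h2.trans (Finset.subset_insert a S)⟩, hna⟩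
  · refine (Finset.sum_bij (fun d _ => d + Finsupp.single a 1) ?_ ?_ ?_ ?_).symm
    · intro d hd
      rw [Finset.mem_finsuppAntidiag'] at hd
      rw [Finset.mem_filter, Finset.mem_finsuppAntidiag']
      refine ⟨⟨?_, ?_⟩, ?_⟩
      · rw [Finsupp.sum_add_index' (fun _ => rfl) (fun _ _ _ => rfl), hd.1,
          Finsupp.sum_single_index rfl]
      · refine Finsupp.support_add.trans ?_
        apply Finset.union_subset hd.2
        refine (Finsupp.support_single_subset).trans ?_
        simp
      · simp
    · intro d _ e _ h
      ext i
      have := DFunLike.congr_fun h i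
      simp only [Finsupp.add_apply] at this
      omega
    · intro d hd
      rw [Finset.mem_filter, Finset.mem_finsuppAntidiag'] at hd
      obtain ⟨⟨h1, h2⟩, h3⟩ := hd
      refine ⟨d - Finsupp.single a 1, ?_, ?_⟩
      · rw [Finset.mem_finsuppAntidiag']
        have heq : (d - Finsupp.single a 1) + Finsupp.single a 1 = d := by
          ext i
          simp only [Finsupp.add_apply, Finsupp.tsub_apply]
          rcases eq_or_ne i a with rfl | hne
          · simp only [Finsupp.single_eq_same]
            omega
          · simp [Finsupp.single_eq_of_ne' (Ne.symm hne)]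
        constructor
        · have := h1
          rw [← heq, Finsupp.sum_add_index' (fun _ => rfl) (fun _ _ _ => rfl),
            Finsupp.sum_single_index rfl] at this
          omega
        · intro i hi
          apply h2
          rw [Finsupp.mem_support_iff] at hi ⊢
          intro h0
          apply hi
          simp [Finsupp.tsub_apply, h0]
      · ext i
        simp only [Finsupp.add_apply, Finsupp.tsub_apply]
        rcases eq_or_ne i a with rfl | hne
        · simp only [Finsupp.single_eq_same]
          omega
        · simp [Finsupp.single_eq_of_ne' (Ne.symm hne)]
    · intro d _
      rw [X, monomial_mul, one_mul, add_comm]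

/-- The isomorphism separating off the last variable. -/
noncomputable def Emv (n : ℕ) :
    MvPolynomial (Fin (n+1)) ℂ ≃ₐ[ℂ] Polynomial (MvPolynomial (Fin n) ℂ) :=
  (MvPolynomial.renameEquiv ℂ finSuccEquivLast).trans (MvPolynomial.optionEquivLeft ℂ (Fin n))

lemma Emv_X_castSucc (k : Fin n) :
    Emv n (MvPolynomial.X (Fin.castSucc k)) = Polynomial.C (MvPolynomial.X k) := by
  simp [Emv, finSuccEquivLast_castSucc, optionEquivLeft_X_some]

lemma Emv_X_last : Emv n (MvPolynomial.X (Fin.last n)) = Polynomial.X := by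
  simp [Emv, finSuccEquivLast_last, optionEquivLeft_X_none]

lemma Emv_rename (p : MvPolynomial (Fin n) ℂ) :
    Emv n (MvPolynomial.rename Fin.castSucc p) = Polynomial.C p := by
  have h : ((Emv n).toAlgHom.comp (MvPolynomial.rename (Fin.castSucc (n := n)))) =
      Polynomial.CAlgHom.comp (AlgHom.id ℂ _) := by
    apply MvPolynomial.algHom_ext
    intro k
    simp only [AlgHom.coe_comp, Function.comp_apply, rename_X, AlgEquiv.toAlgHom_eq_coe,
      AlgHom.coe_coe, AlgHom.coe_id, id_eq, Polynomial.CAlgHom]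
    exact Emv_X_castSucc k
  have := DFunLike.congr_fun h p
  simpa [Polynomial.CAlgHom] using this

lemma hfirst_castSucc (k j : ℕ) (hk : k ≤ n) :
    hfirst (n+1) k j = MvPolynomial.rename Fin.castSucc (hfirst n k j) := by
  unfold hfirst
  rw [rename_hset _ (Fin.castSucc_injective n)]
  congr 1
  ext i
  simp only [Finset.mem_image, Finset.mem_filter, Finset.mem_univ, true_and]
  constructor
  · intro hi
    refine ⟨⟨i.1, lt_of_lt_of_le hi hk⟩, by simpa using hi, by ext; simp⟩
  · rintro ⟨s, hs, rfl⟩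
    simpa using hs

lemma hfirst_top (j : ℕ) : hfirst (n+1) (n+1) j = hset (n+1) Finset.univ j := by
  unfold hfirst
  congr 1
  exact Finset.filter_true_of_mem (fun i _ => i.isLt)

lemma univ_eq_insert :
    (Finset.univ : Finset (Fin (n+1))) =
      insert (Fin.last n) ((Finset.univ : Finset (Fin n)).image Fin.castSucc) := by
  ext i
  simp only [Finset.mem_univ, Finset.mem_insert, Finset.mem_image, true_and, true_iff]
  cases i using Fin.lastCases with
  | last => exact Or.inl rfl
  | cast k => exact Or.inr ⟨k, rfl⟩

lemma Emv_hfull_monic (j : ℕ) :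
    (Emv n (hset (n+1) Finset.univ j)).Monic ∧
      (Emv n (hset (n+1) Finset.univ j)).natDegree = j := by
  induction j with
  | zero =>
      rw [hset_zero, map_one]
      exact ⟨Polynomial.monic_one, Polynomial.natDegree_one⟩
  | succ j ih =>
      have hlast : Fin.last n ∉ (Finset.univ : Finset (Fin n)).image Fin.castSucc := by
        simp only [Finset.mem_image, Finset.mem_univ, true_and]
        rintro ⟨k, hk⟩
        exact (Fin.castSucc_lt_last k).ne hk
      have hrec : hset (n+1) Finset.univ (j+1) =
          hset (n+1) ((Finset.univ : Finset (Fin n)).image Fin.castSucc) (j+1) +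
          MvPolynomial.X (Fin.last n) * hset (n+1) Finset.univ j := by
        conv_lhs => rw [univ_eq_insert]
        rw [hset_insert _ _ hlast, ← univ_eq_insert]
      have hS0 : Emv n (hset (n+1) ((Finset.univ : Finset (Fin n)).image Fin.castSucc) (j+1)) =
          Polynomial.C (hset n Finset.univ (j+1)) := by
        rw [← rename_hset _ (Fin.castSucc_injective n), Emv_rename]
      set G := Emv n (hset (n+1) Finset.univ j) with hG
      have heq : Emv n (hset (n+1) Finset.univ (j+1)) =
          Polynomial.C (hset n Finset.univ (j+1)) + Polynomial.X * G := by
        rw [hrec, map_add, map_mul, Emv_X_last, hS0]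
      have hxg : (Polynomial.X * G).Monic := Polynomial.monic_X.mul ih.1
      have hxgd : (Polynomial.X * G).natDegree = j + 1 := by
        rw [Polynomial.natDegree_mul Polynomial.X_ne_zero ih.1.ne_zero,
          Polynomial.natDegree_X, ih.2, add_comm]
      have hdlt : (Polynomial.C (hset n Finset.univ (j+1))).degree < (Polynomial.X * G).degree := by
        refine lt_of_le_of_lt Polynomial.degree_C_le ?_
        rw [Polynomial.degree_eq_natDegree hxg.ne_zero, hxgd]
        exact_mod_cast Nat.succ_pos j
      constructor
      · rw [heq, add_comm]
        exact hxg.add_of_left hdlt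
      · rw [heq, add_comm]
        have hdeg := Polynomial.degree_add_eq_left_of_degree_lt hdlt
        rw [Polynomial.degree_eq_natDegree hxg.ne_zero, hxgd] at hdeg
        exact Polynomial.natDegree_eq_of_degree_eq_some hdeg

end Aux

lemma key : ∀ (n : ℕ) (b : Fin n → ℕ), (∀ i, 0 < b i) →
    ∃ B : Module.Basis ((i : Fin n) → Fin (b i)) ℂ (MvPolynomial (Fin n) ℂ ⧸ Ib b),
      ∀ j, B j = Ideal.Quotient.mk (Ib b)
        (monomial (Finsupp.equivFunOnFinite.symm fun i => (j i : ℕ)) 1) := by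
  intro N
  induction N with
  | zero =>
      intro b _
      have hIb : Ib b = ⊥ := by
        unfold Ib
        rw [Set.range_eq_empty, Ideal.span_empty]
      have hinj : Function.Injective (Ideal.Quotient.mkₐ ℂ (Ib b)) := by
        intro p q h
        have : p - q ∈ Ib b := by
          rw [← Ideal.Quotient.eq_zero_iff_mem, map_sub]
          simpa [sub_eq_zero] using h
        rw [hIb] at this
        simpa [sub_eq_zero] using this
      let e0 : MvPolynomial (Fin 0) ℂ ≃ₐ[ℂ] (MvPolynomial (Fin 0) ℂ ⧸ Ib b) :=
        AlgEquiv.ofBijective (Ideal.Quotient.mkₐ ℂ (Ib b)) ⟨hinj, Ideal.Quotient.mkₐ_surjective ℂ _⟩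
      let e : (MvPolynomial (Fin 0) ℂ ⧸ Ib b) ≃ₐ[ℂ] ℂ :=
        e0.symm.trans (isEmptyAlgEquiv ℂ (Fin 0))
      refine ⟨(Module.Basis.singleton ((i : Fin 0) → Fin (b i)) ℂ).map e.symm.toLinearEquiv, fun j => ?_⟩
      rw [Module.Basis.map_apply, Module.Basis.singleton_apply]
      have h1 : (Finsupp.equivFunOnFinite.symm fun i : Fin 0 => (j i : ℕ)) = 0 :=
        Subsingleton.elim _ _
      rw [h1]
      show e.symm 1 = _
      rw [map_one, monomial_zero', C_1]
      exact (map_one _).symm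
  | succ n IH =>
      intro b hb
      set d := b (Fin.last n) with hd
      set b' : Fin n → ℕ := fun k => b (Fin.castSucc k) with hbdef
      obtain ⟨B', hB'⟩ := IH b' (fun k => hb _)
      haveI hne : Nonempty ((k : Fin n) → Fin (b' k)) := ⟨fun k => ⟨0, hb _⟩⟩
      haveI hnt : Nontrivial (MvPolynomial (Fin n) ℂ ⧸ Ib b') :=
        nontrivial_of_ne (B' (Classical.arbitrary _)) 0 (B'.ne_zero _)
      let πq : MvPolynomial (Fin n) ℂ →ₐ[ℂ] (MvPolynomial (Fin n) ℂ ⧸ Ib b') :=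
        Ideal.Quotient.mkₐ ℂ (Ib b')
      let π : Polynomial (MvPolynomial (Fin n) ℂ) →ₐ[ℂ]
          Polynomial (MvPolynomial (Fin n) ℂ ⧸ Ib b') := Polynomial.mapAlgHom πq
      set Egen := Emv n (hfirst (n+1) (n+1) d) with hEgendef
      set G := π Egen with hGdef
      have hmon := Emv_hfull_monic (n := n) d
      rw [← hfirst_top] at hmon
      have hπE : π Egen = Egen.map (πq : MvPolynomial (Fin n) ℂ →+* _) := rfl
      have hGmonic : G.Monic := by rw [hGdef, hπE]; exact hmon.1.map _
      have hGdeg : G.natDegree = d := by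
        rw [hGdef, hπE, hmon.1.natDegree_map, hmon.2]
      set J := Ideal.span ({G} : Set (Polynomial (MvPolynomial (Fin n) ℂ ⧸ Ib b'))) with hJdef
      haveI : J.IsTwoSided := ⟨fun x ha => mul_comm x _ ▸ J.smul_mem _ ha⟩
      let Φ : MvPolynomial (Fin (n+1)) ℂ →ₐ[ℂ]
          (Polynomial (MvPolynomial (Fin n) ℂ ⧸ Ib b') ⧸ J) :=
        ((Ideal.Quotient.mkₐ ℂ J).comp π).comp (Emv n).toAlgHom
      have hπsurj : Function.Surjective π :=
        Polynomial.map_surjective _ Ideal.Quotient.mk_surjective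
      have hΦsurj : Function.Surjective Φ :=
        (Ideal.Quotient.mkₐ_surjective ℂ J).comp (hπsurj.comp (Emv n).surjective)
      have hkerπ : RingHom.ker π = Ideal.map Polynomial.C (Ib b') := by
        have h1 : (π : Polynomial (MvPolynomial (Fin n) ℂ) →+* _) =
            Polynomial.mapRingHom (Ideal.Quotient.mk (Ib b')) :=
          Polynomial.mapAlgHom_coe_ringHom πq
        have h2 : RingHom.ker π =
            RingHom.ker (Polynomial.mapRingHom (Ideal.Quotient.mk (Ib b'))) := by
          rw [← h1]; rfl
        rw [h2, Polynomial.ker_mapRingHom, Ideal.mk_ker]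
      -- the range of generators of `Ib b`
      have hrange : (Set.range fun i : Fin (n+1) => hfirst (n+1) ((i:ℕ)+1) (b i)) =
          (Set.range fun k : Fin n =>
            MvPolynomial.rename Fin.castSucc (hfirst n ((k:ℕ)+1) (b' k)))
            ∪ {hfirst (n+1) (n+1) d} := by
        ext p
        constructor
        · rintro ⟨i, rfl⟩
          cases i using Fin.lastCases with
          | last => exact Or.inr (by simp [hd])
          | cast k =>
              refine Or.inl ⟨k, ?_⟩
              show MvPolynomial.rename Fin.castSucc (hfirst n ((k:ℕ)+1) (b' k)) =
                hfirst (n+1) (((Fin.castSucc k) : ℕ)+1) (b (Fin.castSucc k))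
              rw [Fin.coe_castSucc]
              exact (hfirst_castSucc _ _ (by omega : (k:ℕ)+1 ≤ n)).symm
        · rintro (⟨k, rfl⟩ | hp)
          · refine ⟨Fin.castSucc k, ?_⟩
            show hfirst (n+1) (((Fin.castSucc k) : ℕ)+1) (b (Fin.castSucc k)) =
              MvPolynomial.rename Fin.castSucc (hfirst n ((k:ℕ)+1) (b' k))
            rw [Fin.coe_castSucc]
            exact hfirst_castSucc _ _ (by omega : (k:ℕ)+1 ≤ n)
          · exact ⟨Fin.last n, by simpa using hp.symm⟩
      have hmapIb : Ideal.map (Emv n) (Ib b) =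
          Ideal.map Polynomial.C (Ib b') ⊔ Ideal.span {Egen} := by
        rw [Ib, Ideal.map_span, hrange, Set.image_union, Set.image_singleton, Ideal.span_union]
        congr 1
        rw [Ib, Ideal.map_span]
        congr 1
        rw [← Set.range_comp, ← Set.range_comp]
        refine congrArg _ (funext fun k => ?_)
        simp only [Function.comp_apply]
        exact Emv_rename _
      have hJmap : J = Ideal.map π (Ideal.span {Egen}) := by
        rw [Ideal.map_span, Set.image_singleton, hJdef, hGdef]
      have hcomapJ : Ideal.comap π J = Ideal.map (Emv n) (Ib b) := by
        rw [hJmap, Ideal.comap_map_of_surjective _ hπsurj, ← RingHom.ker_eq_comap_bot,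
          hkerπ, hmapIb, sup_comm]
      have hker : RingHom.ker Φ = Ib b := by
        ext f
        rw [RingHom.mem_ker]
        have h1 : Φ f = Ideal.Quotient.mk J (π (Emv n f)) := rfl
        rw [h1, Ideal.Quotient.eq_zero_iff_mem, ← Ideal.mem_comap, hcomapJ,
          ← Ideal.mem_comap, Ideal.comap_map_of_bijective _ (Emv n).bijective]
      let e : (MvPolynomial (Fin (n+1)) ℂ ⧸ Ib b) ≃ₐ[ℂ]
          (Polynomial (MvPolynomial (Fin n) ℂ ⧸ Ib b') ⧸ J) :=
        (Ideal.quotientEquivAlgOfEq ℂ hker.symm).trans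
          (Ideal.quotientKerAlgEquivOfSurjective hΦsurj)
      have he : ∀ f, e (Ideal.Quotient.mk (Ib b) f) = Φ f := fun f => rfl
      -- power basis for the adjoin-root
      let pb : PowerBasis (MvPolynomial (Fin n) ℂ ⧸ Ib b') (AdjoinRoot G) :=
        AdjoinRoot.powerBasis' hGmonic
      have hdim : pb.dim = d := hGdeg
      let Bfull : Module.Basis ((((k : Fin n) → Fin (b' k))) × Fin pb.dim) ℂ
          (Polynomial (MvPolynomial (Fin n) ℂ ⧸ Ib b') ⧸ J) :=
        (B'.smulTower pb.basis : Module.Basis _ ℂ (AdjoinRoot G))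
      let σ : ((((k : Fin n) → Fin (b' k))) × Fin pb.dim) ≃ ((i : Fin (n+1)) → Fin (b i)) :=
        { toFun := fun p i => Fin.lastCases (motive := fun i => Fin (b i))
            (Fin.cast hdim p.2) (fun k => p.1 k) i
          invFun := fun j => (fun k => j (Fin.castSucc k), Fin.cast hdim.symm (j (Fin.last n)))
          left_inv := by
            rintro ⟨p, t⟩
            refine Prod.ext (funext fun k => ?_) ?_
            · simp
            · simp
          right_inv := by
            intro j
            funext i
            cases i using Fin.lastCases with
            | last => simp
            | cast k => simp }
      refine ⟨(Bfull.map e.symm.toLinearEquiv).reindex σ, fun j => ?_⟩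
      rw [Module.Basis.reindex_apply, Module.Basis.map_apply, AlgEquiv.toLinearEquiv_apply]
      rw [AlgEquiv.symm_apply_eq (e := e)]
      rw [he]
      -- compute both sides
      set t : ℕ := (j (Fin.last n) : ℕ) with ht
      set jc : (k : Fin n) → Fin (b' k) := fun k => j (Fin.castSucc k) with hjc
      set m' : Fin n →₀ ℕ := Finsupp.equivFunOnFinite.symm (fun k => ((jc k : ℕ))) with hm'
      have hσsymm : σ.symm j = (jc, Fin.cast hdim.symm (j (Fin.last n))) := rfl
      rw [hσsymm]
      have hBfull : Bfull (jc, Fin.cast hdim.symm (j (Fin.last n))) =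
          B' jc • (AdjoinRoot.root G) ^ t := by
        refine (Module.Basis.smulTower_apply (b := B') (c := pb.basis) _).trans ?_
        congr 1
        show pb.basis (Fin.cast hdim.symm (j (Fin.last n))) = _
        rw [pb.basis_eq_pow]
        have h3 : pb.gen = AdjoinRoot.root G := rfl
        rw [h3]
        congr 1
      rw [hBfull]
      -- decompose the monomial
      have hmsplit : (Finsupp.equivFunOnFinite.symm fun i : Fin (n+1) => ((j i : ℕ))) =
          Finsupp.mapDomain Fin.castSucc m' + Finsupp.single (Fin.last n) t := by
        ext i
        cases i using Fin.lastCases with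
        | last =>
            rw [Finsupp.add_apply,
              Finsupp.mapDomain_notin_range _ _ (by
                rintro ⟨k, hk⟩
                exact (Fin.castSucc_lt_last k).ne hk),
              Finsupp.single_eq_same]
            simp [Finsupp.equivFunOnFinite]
            rfl
        | cast k =>
            rw [Finsupp.add_apply, Finsupp.mapDomain_apply (Fin.castSucc_injective n),
              Finsupp.single_eq_of_ne' (Fin.castSucc_lt_last k).ne']
            simp [Finsupp.equivFunOnFinite, hm', hjc]
            rfl
      have hmono : (monomial (Finsupp.equivFunOnFinite.symm fun i : Fin (n+1) => ((j i : ℕ)))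
          (1 : ℂ)) = MvPolynomial.rename Fin.castSucc (monomial m' 1) *
            (MvPolynomial.X (Fin.last n)) ^ t := by
        rw [rename_monomial, X_pow_eq_monomial, monomial_mul, one_mul, hmsplit]
      rw [hmono, map_mul, map_pow]
      have hΦrename : Φ (MvPolynomial.rename Fin.castSucc (monomial m' 1)) =
          algebraMap (MvPolynomial (Fin n) ℂ ⧸ Ib b')
            (Polynomial (MvPolynomial (Fin n) ℂ ⧸ Ib b') ⧸ J)
            (Ideal.Quotient.mk (Ib b') (monomial m' 1)) := by
        have h1 : Φ (MvPolynomial.rename Fin.castSucc (monomial m' 1)) =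
            Ideal.Quotient.mk J (π (Emv n (MvPolynomial.rename Fin.castSucc (monomial m' 1)))) :=
          rfl
        rw [h1, Emv_rename]
        have h2 : π (Polynomial.C (monomial m' 1)) =
            Polynomial.C (Ideal.Quotient.mk (Ib b') (monomial m' 1)) := by
          show Polynomial.map _ _ = _
          rw [Polynomial.map_C]
          rfl
        rw [h2]
        rfl
      have hΦX : Φ (MvPolynomial.X (Fin.last n)) = AdjoinRoot.root G := by
        have h1 : Φ (MvPolynomial.X (Fin.last n)) =
            Ideal.Quotient.mk J (π (Emv n (MvPolynomial.X (Fin.last n)))) := rfl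
        rw [h1, Emv_X_last]
        have h2 : π (Polynomial.X) =
            (Polynomial.X : Polynomial (MvPolynomial (Fin n) ℂ ⧸ Ib b')) := by
          show Polynomial.map _ _ = _
          rw [Polynomial.map_X]
        rw [h2]
        rfl
      rw [hΦrename, hΦX, ← hB' jc]
      exact Algebra.smul_def (B' jc) ((AdjoinRoot.root G) ^ t)

/-- For `b ∈ 𝓑'`, the quotient `R_b = R/I_b` has dimension `b_1 ⋯ b_n` over `ℂ`, with a
basis given by the classes of the monomials `x_1^{j_1} ⋯ x_n^{j_n}` with `0 ≤ j_i < b_i`. -/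
theorem stmt3 {n : ℕ} (b : Fin n → ℕ) (hb : Bprime b) :
    Module.finrank ℂ (MvPolynomial (Fin n) ℂ ⧸ Ib b) = ∏ i, b i ∧
    ∃ B : Module.Basis ((i : Fin n) → Fin (b i)) ℂ (MvPolynomial (Fin n) ℂ ⧸ Ib b),
      ∀ j, B j = Ideal.Quotient.mk (Ib b)
        (monomial (Finsupp.equivFunOnFinite.symm fun i => (j i : ℕ)) 1) := by
  obtain ⟨B, hB⟩ := key n b hb.1
  refine ⟨?_, B, hB⟩
  rw [Module.finrank_eq_card_basis B, Fintype.card_pi]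
  simp
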